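/- Let A, B be bounded Hermitian operators. Then for all t ≥ 0: ‖[A,[A, e^{-it(A+B)}]]‖ ≤ 2t‖A‖·‖[A,B]‖ in operator norm. -/

import Mathlib

set_option maxHeartbeats 1000000
set_option synthInstance.maxHeartbeats 400000

open Complex

open NormedSpace in
/-- `‖[A,[A, e^{-it(A+B)}]]‖ ≤ 2t‖A‖‖[A,B]‖` for all `t ≥ 0`. -/
theorem stmt10 {E : Type*} [NormedAddCommGroup E] [InnerProductSpace ℂ E] [CompleteSpace E]
    (A B : E →L[ℂ] E) (hA : IsSelfAdjoint A) (hB : IsSelfAdjoint B)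
    (t : ℝ) (ht : 0 ≤ t) :
    ‖A * (A * NormedSpace.exp ((-(Complex.I * t)) • (A + B))
            - NormedSpace.exp ((-(Complex.I * t)) • (A + B)) * A)
        - (A * NormedSpace.exp ((-(Complex.I * t)) • (A + B))
            - NormedSpace.exp ((-(Complex.I * t)) • (A + B)) * A) * A‖
      ≤ 2 * t * ‖A‖ * ‖A * B - B * A‖ := by
  rcases subsingleton_or_nontrivial E with hE | hE
  · haveI : Subsingleton (E →L[ℂ] E) := ⟨fun f g => ContinuousLinearMap.ext fun x => Subsingleton.elim _ _⟩
    rw [Subsingleton.elim (_ - _) (0 : E →L[ℂ] E), norm_zero]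
    positivity
  set H : E →L[ℂ] E := A + B with hHdef
  set x : E →L[ℂ] E := I • H with hxdef
  set U : E →L[ℂ] E := NormedSpace.exp ((-(I * (t : ℂ))) • H) with hUdef
  have hsa : IsSelfAdjoint H := hA.add hB
  haveI : Nontrivial (E →L[ℂ] E) := by
    obtain ⟨v, hv⟩ := exists_ne (0 : E)
    exact ⟨1, 0, fun h => hv (by simpa using DFunLike.congr_fun h v)⟩
  -- unitarity of exp (s • x)
  have hunit : ∀ s : ℝ, NormedSpace.exp (s • x) ∈ unitary (E →L[ℂ] E) := by
    intro s
    have h1 : s • x = I • (s • H) := smul_comm s I H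
    rw [h1]
    let +nondep : NormedAlgebra ℚ (E →L[ℂ] E) := .restrictScalars ℚ ℂ _
    exact exp_mem_unitary_of_mem_skewAdjoint
      ((IsSelfAdjoint.smul (star_trivial s) hsa).smul_mem_skewAdjoint conj_I)
  have hnorm : ∀ s : ℝ, ‖NormedSpace.exp (s • x)‖ = 1 := fun s =>
    CStarRing.norm_of_mem_unitary (hunit s)
  -- the conjugated function
  set f : ℝ → (E →L[ℂ] E) := fun s =>
    NormedSpace.exp (s • x) * A * NormedSpace.exp (s • (-x)) with hfdef
  have hderiv : ∀ s : ℝ, HasDerivAt f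
      (NormedSpace.exp (s • x) * (x * A - A * x) * NormedSpace.exp (s • (-x))) s := by
    intro s
    have h1 := ((hasDerivAt_exp_smul_const x s).mul_const A).mul
      (hasDerivAt_exp_smul_const' (-x) s)
    convert h1 using 1
    iterate 4 rfl
    noncomm_ring
  have hcomm : x * A - A * x = I • (B * A - A * B) := by
    rw [hxdef, hHdef]
    simp only [smul_mul_assoc, mul_smul_comm, ← smul_sub]
    congr 1
    noncomm_ring
  have hbound : ∀ s : ℝ, ‖NormedSpace.exp (s • x) * (x * A - A * x) *
      NormedSpace.exp (s • (-x))‖ ≤ ‖A * B - B * A‖ := by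
    intro s
    have hc : ‖x * A - A * x‖ = ‖A * B - B * A‖ := by
      rw [hcomm, norm_smul, Complex.norm_I, one_mul, norm_sub_rev]
    calc ‖NormedSpace.exp (s • x) * (x * A - A * x) * NormedSpace.exp (s • (-x))‖
        ≤ ‖NormedSpace.exp (s • x) * (x * A - A * x)‖ * ‖NormedSpace.exp (s • (-x))‖ :=
          norm_mul_le _ _
      _ ≤ ‖NormedSpace.exp (s • x)‖ * ‖x * A - A * x‖ * ‖NormedSpace.exp (s • (-x))‖ := by
          gcongr; exact norm_mul_le _ _
      _ = ‖A * B - B * A‖ := by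
          have : s • (-x) = (-s) • x := by rw [smul_neg, neg_smul]
          rw [this, hnorm, hnorm, hc, one_mul, mul_one]
  have hmvt : ‖f t - f 0‖ ≤ ‖A * B - B * A‖ * ‖t - (0:ℝ)‖ :=
    convex_univ.norm_image_sub_le_of_norm_hasDerivWithin_le
      (fun s _ => (hderiv s).hasDerivWithinAt) (fun s _ => hbound s)
      (Set.mem_univ 0) (Set.mem_univ t)
  -- identify U
  have hU2 : U = NormedSpace.exp (t • (-x)) := by
    rw [hUdef]
    congr 1
    rw [← Complex.coe_smul, hxdef, ← neg_smul, smul_smul]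
    congr 1
    ring
  have hUnorm : ‖U‖ = 1 := by
    have : t • (-x) = (-t) • x := by rw [smul_neg, neg_smul]
    rw [hU2, this, hnorm]
  have hinv : U * NormedSpace.exp (t • x) = 1 := by
    let +nondep : NormedAlgebra ℚ (E →L[ℂ] E) := .restrictScalars ℚ ℂ _
    rw [hU2, ← exp_add_of_commute ((((Commute.refl x).neg_left).smul_left t).smul_right t)]
    simp
  have hf0 : f 0 = A := by simp [hfdef]
  have hft : U * f t = A * U := by
    rw [hfdef]
    simp only
    rw [show U * (NormedSpace.exp (t • x) * A * NormedSpace.exp (t • (-x)))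
        = (U * NormedSpace.exp (t • x)) * A * NormedSpace.exp (t • (-x)) by noncomm_ring,
      hinv, one_mul, ← hU2]
  have hC : A * U - U * A = U * (f t - f 0) := by
    rw [mul_sub, hft, hf0]
  have hCnorm : ‖A * U - U * A‖ ≤ t * ‖A * B - B * A‖ := by
    rw [hC]
    calc ‖U * (f t - f 0)‖ ≤ ‖U‖ * ‖f t - f 0‖ := norm_mul_le _ _
      _ ≤ 1 * (‖A * B - B * A‖ * ‖t - (0:ℝ)‖) := by rw [hUnorm]; gcongr
      _ = t * ‖A * B - B * A‖ := by
          rw [one_mul, sub_zero, Real.norm_eq_abs, _root_.abs_of_nonneg ht]; ring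
  set C : E →L[ℂ] E := A * U - U * A with hCdef
  calc ‖A * C - C * A‖ ≤ ‖A * C‖ + ‖C * A‖ := norm_sub_le _ _
    _ ≤ ‖A‖ * ‖C‖ + ‖C‖ * ‖A‖ := add_le_add (norm_mul_le _ _) (norm_mul_le _ _)
    _ = 2 * ‖A‖ * ‖C‖ := by ring
    _ ≤ 2 * ‖A‖ * (t * ‖A * B - B * A‖) := by
        gcongr
    _ = 2 * t * ‖A‖ * ‖A * B - B * A‖ := by ring
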